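/- Let f, g be bounded linear functionals on a real normed space X with ‖f‖, ‖g‖ ≤ 1, f ≠ 0, g ≠ f. Suppose there exist x ∈ X and r > 0 such that f(x + z) = ‖x + z‖ whenever ‖z‖ < r, and suppose also that g attains the norm somewhere on its own ball in the sense that there exist x_g, r_g > 0 with g(x_g + z) = ‖x_g + z‖ for ‖z‖ < r_g. Then for every z with ‖z‖ < r, g(x + z) < ‖x + z‖. -/

import Mathlib

theorem stmt_1 {X : Type*} [NormedAddCommGroup X] [NormedSpace ℝ X]
    (f g : X →L[ℝ] ℝ) (hf0 : f ≠ 0) (hf1 : ‖f‖ ≤ 1) (hg1 : ‖g‖ ≤ 1) (hgf : g ≠ f)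
    (x : X) (r : ℝ) (hr : 0 < r)
    (hsupp : ∀ z : X, ‖z‖ < r → f (x + z) = ‖x + z‖)
    (xg : X) (rg : ℝ) (hrg : 0 < rg)
    (hsuppg : ∀ z : X, ‖z‖ < rg → g (xg + z) = ‖xg + z‖) :
    ∀ z : X, ‖z‖ < r → g (x + z) < ‖x + z‖ := by
  have bound : ∀ y : X, g y ≤ ‖y‖ := by
    intro y
    have h := g.le_opNorm y
    have h2 : g y ≤ ‖g y‖ := le_abs_self _
    nlinarith [norm_nonneg y, norm_nonneg (g y)]
  intro z hz
  rcases lt_or_eq_of_le (bound (x + z)) with h | heq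
  · exact h
  exfalso
  have hkey : ∀ w : X, g w ≤ f w := by
    intro w
    set t : ℝ := (r - ‖z‖) / (2 * (‖w‖ + 1)) with ht
    have hw1 : (0:ℝ) < ‖w‖ + 1 := by positivity
    have htpos : 0 < t := div_pos (by linarith) (by positivity)
    have hball : ‖z + t • w‖ < r := by
      have h1 : ‖z + t • w‖ ≤ ‖z‖ + t * ‖w‖ := by
        calc ‖z + t • w‖ ≤ ‖z‖ + ‖t • w‖ := norm_add_le _ _
          _ = ‖z‖ + |t| * ‖w‖ := by rw [norm_smul, Real.norm_eq_abs]
          _ = ‖z‖ + t * ‖w‖ := by rw [abs_of_pos htpos]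
      have h2 : t * ‖w‖ < r - ‖z‖ := by
        have h3 : t * ‖w‖ ≤ t * (‖w‖ + 1) := by nlinarith [norm_nonneg w]
        have heq2 : t * (‖w‖ + 1) = (r - ‖z‖) / 2 := by
          rw [ht]; field_simp
        linarith
      linarith
    have hf2 : f (x + (z + t • w)) = ‖x + (z + t • w)‖ := hsupp _ hball
    have hg2 : g (x + (z + t • w)) ≤ ‖x + (z + t • w)‖ := bound _
    have e1 : f (x + (z + t • w)) = f (x + z) + t * f w := by
      rw [show x + (z + t • w) = (x + z) + t • w by abel, map_add, map_smul]; simp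
    have e2 : g (x + (z + t • w)) = g (x + z) + t * g w := by
      rw [show x + (z + t • w) = (x + z) + t • w by abel, map_add, map_smul]; simp
    have hfxz : f (x + z) = ‖x + z‖ := hsupp z hz
    have hcomp : g (x + z) + t * g w ≤ f (x + z) + t * f w := by
      rw [← e1, ← e2, hf2]; exact hg2
    rw [hfxz, ← heq] at hcomp
    have := (mul_le_mul_iff_right₀ htpos).mp (by linarith : t * g w ≤ t * f w)
    exact this
  have hgef : g = f := by
    ext w
    have h1 := hkey w
    have h2 := hkey (-w)
    simp only [map_neg] at h2
    linarith
  exact hgf hgef
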